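/- The radial polynomials are orthogonal on [0,1] with weight r: for indices (l,m) and (l,m') with m,m' ≥ |l| and m-|l|, m'-|l| even, ∫₀¹ √(2(m+1)) R_m^{|l|}(r) · √(2(m'+1)) R_{m'}^{|l|}(r) · r dr = δ_{m,m'}. -/

import Mathlib

open MeasureTheory intervalIntegral

/-- The radial (Zernike) polynomial `R_m^{|l|}`. -/
noncomputable def radialPoly (m l : ℕ) (r : ℝ) : ℝ :=
  ∑ j ∈ Finset.range ((m - l) / 2 + 1),
    (-1 : ℝ) ^ j * (Nat.factorial (m - j) : ℝ) /
      ((Nat.factorial j : ℝ) * (Nat.factorial ((m + l) / 2 - j) : ℝ) *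
        (Nat.factorial ((m - l) / 2 - j) : ℝ)) * r ^ (m - 2 * j)

section ZernikeAux

open Polynomial Finset

noncomputable def Zpoly (l p : ℕ) : ℝ[X] :=
  ∑ j ∈ Finset.range (p+1),
    C ((-1:ℝ)^j * ((l + 2*p - j).factorial : ℝ) /
        ((j.factorial : ℝ) * ((l + p - j).factorial : ℝ) * ((p - j).factorial : ℝ))) *
      X ^ (p - j)

noncomputable def Gpoly (l p : ℕ) : ℝ[X] := X ^ (l + p) * (X - 1) ^ p

theorem rodrigues (l p : ℕ) :
    derivative^[p] (Gpoly l p) = C ((p.factorial : ℝ)) * (X ^ l * Zpoly l p) := by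
  have hG : Gpoly l p =
      ∑ k ∈ Finset.range (p+1),
        C (((-1:ℝ)) ^ (k + p) * (p.choose k : ℝ)) * X ^ (l + p + k) := by
    rw [Gpoly, sub_pow]
    rw [Finset.mul_sum]
    refine Finset.sum_congr rfl fun k hk => ?_
    simp only [one_pow, mul_one, C_mul, C_pow, map_neg, map_one, C_eq_natCast]
    ring
  rw [hG, iterate_derivative_sum]
  rw [show C ((p.factorial : ℝ)) * (X ^ l * Zpoly l p) =
      ∑ j ∈ Finset.range (p+1),
        C ((p.factorial : ℝ) * ((-1:ℝ)^j * ((l + 2*p - j).factorial : ℝ) /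
          ((j.factorial : ℝ) * ((l + p - j).factorial : ℝ) * ((p - j).factorial : ℝ)))) *
          X ^ (l + (p - j)) by
    rw [Zpoly, Finset.mul_sum, Finset.mul_sum]
    refine Finset.sum_congr rfl fun j hj => ?_
    rw [C_mul, pow_add]
    ring]
  rw [← Finset.sum_range_reflect]
  refine Finset.sum_congr rfl fun k hk => ?_
  rw [Finset.mem_range] at hk
  have hk' : k ≤ p := Nat.lt_succ_iff.mp hk
  rw [iterate_derivative_C_mul, iterate_derivative_X_pow_eq_C_mul]
  rw [show p + 1 - 1 - k = p - k from by omega]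
  rw [show l + p + (p - k) - p = l + (p - k) from by omega]
  rw [show l + p + (p - k) = l + 2*p - k from by omega,
    show p - k + p = k + 2*(p - k) from by omega, pow_add, pow_mul, neg_one_sq, one_pow, mul_one,
    Nat.choose_symm hk', ← mul_assoc, ← C_mul]
  congr 2
  have h1 : ((l + p - k).factorial : ℝ) * ((l + 2*p - k).descFactorial p : ℝ)
      = ((l + 2*p - k).factorial : ℝ) := by
    rw [← Nat.cast_mul]
    congr 1
    have := Nat.factorial_mul_descFactorial (n := l + 2*p - k) (k := p) (by omega)
    rwa [show l + 2*p - k - p = l + p - k from by omega] at this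
  have h2 : ((p.choose k : ℝ)) * (k.factorial : ℝ) * ((p - k).factorial : ℝ)
      = (p.factorial : ℝ) := by
    rw [← Nat.cast_mul, ← Nat.cast_mul, Nat.choose_mul_factorial_mul_factorial hk']
  have hne : ∀ n : ℕ, (n.factorial : ℝ) ≠ 0 := fun n => Nat.cast_ne_zero.mpr n.factorial_ne_zero
  have key : ((p.choose k : ℝ)) * ((l + 2*p - k).descFactorial p : ℝ)
      = (p.factorial : ℝ) * ((l + 2*p - k).factorial : ℝ) /
        ((k.factorial : ℝ) * ((l + p - k).factorial : ℝ) * ((p - k).factorial : ℝ)) := by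
    rw [eq_div_iff (by positivity)]
    calc ((p.choose k : ℝ)) * ((l + 2*p - k).descFactorial p : ℝ) *
          ((k.factorial : ℝ) * ((l + p - k).factorial : ℝ) * ((p - k).factorial : ℝ))
        = ((p.choose k : ℝ) * (k.factorial : ℝ) * ((p - k).factorial : ℝ)) *
          (((l + p - k).factorial : ℝ) * ((l + 2*p - k).descFactorial p : ℝ)) := by ring
      _ = _ := by rw [h1, h2]
  linear_combination ((-1:ℝ)^k) * key

theorem Gpoly_eval_zero (l p i : ℕ) (hi : i < p) :
    eval 0 (derivative^[i] (Gpoly l p)) = 0 := by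
  have hdvd : (X : ℝ[X]) ^ (l + p) ∣ Gpoly l p := ⟨(X-1)^p, rfl⟩
  obtain ⟨g, hg⟩ := pow_sub_dvd_iterate_derivative_of_pow_dvd i hdvd
  rw [hg, eval_mul, eval_pow, eval_X, zero_pow (by omega), zero_mul]

theorem Gpoly_eval_one (l p i : ℕ) (hi : i < p) :
    eval 1 (derivative^[i] (Gpoly l p)) = 0 := by
  have hdvd : ((X : ℝ[X]) - 1) ^ p ∣ Gpoly l p := ⟨X^(l+p), mul_comm _ _⟩
  obtain ⟨g, hg⟩ := pow_sub_dvd_iterate_derivative_of_pow_dvd i hdvd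
  rw [hg, eval_mul, eval_pow, eval_sub, eval_X, eval_one, sub_self, zero_pow (by omega), zero_mul]

theorem ibp_step (Q H : ℝ[X]) (h0 : eval 0 H = 0) (h1 : eval 1 H = 0) :
    ∫ x in (0:ℝ)..1, eval x Q * eval x (derivative H)
      = - ∫ x in (0:ℝ)..1, eval x (derivative Q) * eval x H := by
  have hsum := intervalIntegral.integral_deriv_mul_eq_sub (a := 0) (b := 1)
    (u := fun x => eval x Q) (v := fun x => eval x H)
    (u' := fun x => eval x (derivative Q)) (v' := fun x => eval x (derivative H))
    (fun x _ => Q.hasDerivAt x) (fun x _ => H.hasDerivAt x)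
    ((Polynomial.continuous _).intervalIntegrable _ _)
    ((Polynomial.continuous _).intervalIntegrable _ _)
  rw [h0, h1, mul_zero, mul_zero, sub_zero] at hsum
  rw [intervalIntegral.integral_add (f := fun x => eval x (derivative Q) * eval x H)
    (g := fun x => eval x Q * eval x (derivative H))
    (((Polynomial.continuous _).mul (Polynomial.continuous _)).intervalIntegrable _ _)
    (((Polynomial.continuous _).mul (Polynomial.continuous _)).intervalIntegrable _ _)] at hsum
  linarith

theorem ibp_iter (l p : ℕ) (Q : ℝ[X]) : ∀ i, i ≤ p →
    (∫ x in (0:ℝ)..1, eval x Q * eval x (derivative^[p] (Gpoly l p)))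
      = (-1:ℝ)^i * ∫ x in (0:ℝ)..1,
          eval x (derivative^[i] Q) * eval x (derivative^[p-i] (Gpoly l p)) := by
  intro i
  induction i with
  | zero => intro _; simp
  | succ i ih =>
    intro hip
    rw [ih (by omega)]
    have hsplit : p - i = (p - (i+1)) + 1 := by omega
    rw [hsplit, Function.iterate_succ_apply']
    rw [ibp_step _ _ (Gpoly_eval_zero l p _ (by omega)) (Gpoly_eval_one l p _ (by omega))]
    rw [show derivative (derivative^[i] Q) = derivative^[i+1] Q from
      (Function.iterate_succ_apply' _ _ _).symm]
    ring

theorem beta_int : ∀ (b a : ℕ), (∫ x in (0:ℝ)..1, x^a * (x-1)^b)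
    = (-1:ℝ)^b * ((a.factorial : ℝ) * (b.factorial : ℝ) / ((a+b+1).factorial : ℝ)) := by
  intro b
  induction b with
  | zero =>
    intro a
    simp only [pow_zero, mul_one, integral_pow, one_pow, Nat.factorial_zero, Nat.cast_one,
      Nat.add_zero]
    rw [show a + 0 + 1 = a + 1 from by omega, Nat.factorial_succ]
    push_cast
    rw [zero_pow (by omega)]
    have : ((a:ℝ)+1) ≠ 0 := by positivity
    field_simp
    norm_num
  | succ b ih =>
    intro a
    have hu : ∀ x ∈ Set.uIcc (0:ℝ) 1, HasDerivAt (fun x : ℝ => x^(a+1))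
        (((a:ℝ)+1) * x^a) x := by
      intro x _
      simpa using (hasDerivAt_pow (a+1) x)
    have hv : ∀ x ∈ Set.uIcc (0:ℝ) 1, HasDerivAt (fun x : ℝ => (x-1)^(b+1))
        (((b:ℝ)+1) * (x-1)^b) x := by
      intro x _
      have h := ((hasDerivAt_id x).sub_const 1).pow (b+1)
      simp at h
      exact h
    have hcont1 : Continuous fun x : ℝ => ((a:ℝ)+1) * x^a * (x-1)^(b+1) := by fun_prop
    have hcont2 : Continuous fun x : ℝ => x^(a+1) * (((b:ℝ)+1) * (x-1)^b) := by fun_prop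
    have hsum := intervalIntegral.integral_deriv_mul_eq_sub (a := 0) (b := 1)
      (u := fun x : ℝ => x^(a+1)) (v := fun x : ℝ => (x-1)^(b+1))
      (u' := fun x => ((a:ℝ)+1) * x^a) (v' := fun x => ((b:ℝ)+1) * (x-1)^b)
      hu hv (Continuous.intervalIntegrable (by fun_prop) _ _)
      (Continuous.intervalIntegrable (by fun_prop) _ _)
    rw [intervalIntegral.integral_add (hcont1.intervalIntegrable _ _)
      (hcont2.intervalIntegrable _ _)] at hsum
    have e1 : (∫ x in (0:ℝ)..1, ((a:ℝ)+1) * x^a * (x-1)^(b+1))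
        = ((a:ℝ)+1) * ∫ x in (0:ℝ)..1, x^a * (x-1)^(b+1) := by
      rw [← intervalIntegral.integral_const_mul]
      congr 1; ext x; ring
    have e2 : (∫ x in (0:ℝ)..1, x^(a+1) * (((b:ℝ)+1) * (x-1)^b))
        = ((b:ℝ)+1) * ∫ x in (0:ℝ)..1, x^(a+1) * (x-1)^b := by
      rw [← intervalIntegral.integral_const_mul]
      congr 1; ext x; ring
    rw [e1, e2, ih (a+1)] at hsum
    have hb : (1:ℝ)^(a+1) * (1-1)^(b+1) - 0^(a+1) * (0-1)^(b+1) = 0 := by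
      rw [zero_pow (by omega)]
      simp
    rw [hb] at hsum
    have ha1 : ((a:ℝ)+1) ≠ 0 := by positivity
    have key : (∫ x in (0:ℝ)..1, x^a * (x-1)^(b+1))
        = -(((b:ℝ)+1) * ((-1:ℝ)^b * ((a+1).factorial * (b.factorial) /
            ((a+1+b+1).factorial : ℝ)))) / ((a:ℝ)+1) := by
      field_simp at hsum ⊢
      linarith
    rw [key]
    have hfac1 : (((a+1).factorial : ℝ)) = ((a:ℝ)+1) * (a.factorial : ℝ) := by
      rw [Nat.factorial_succ]; push_cast; ring
    have hfac2 : (((b+1).factorial : ℝ)) = ((b:ℝ)+1) * (b.factorial : ℝ) := by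
      rw [Nat.factorial_succ]; push_cast; ring
    have hfac3 : (a + (b+1) + 1) = (a + 1 + b + 1) := by omega
    rw [hfac3, hfac1, hfac2]
    have hne : ((a+1+b+1).factorial : ℝ) ≠ 0 := Nat.cast_ne_zero.mpr (Nat.factorial_ne_zero _)
    field_simp
    ring

theorem natDegree_Zpoly_le (l q : ℕ) : (Zpoly l q).natDegree ≤ q := by
  refine Polynomial.natDegree_sum_le_of_forall_le _ _ fun j hj => ?_
  refine le_trans (natDegree_C_mul_le _ _) ?_
  simpa [natDegree_X_pow] using Nat.sub_le q j

theorem iterate_derivative_Zpoly (l p : ℕ) :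
    derivative^[p] (Zpoly l p)
      = C (((l + 2*p).factorial : ℝ) / ((l + p).factorial : ℝ)) := by
  rw [Zpoly, iterate_derivative_sum]
  rw [Finset.sum_eq_single 0]
  · rw [iterate_derivative_C_mul, iterate_derivative_X_pow_eq_C_mul]
    simp only [Nat.sub_zero, Nat.sub_self, Nat.descFactorial_self, pow_zero, mul_one, ← C_mul]
    congr 1
    have h0 : (Nat.factorial 0 : ℝ) = 1 := by norm_num [Nat.factorial]
    have hne : ((l+p).factorial : ℝ) ≠ 0 := Nat.cast_ne_zero.mpr (Nat.factorial_ne_zero _)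
    have hne2 : ((p).factorial : ℝ) ≠ 0 := Nat.cast_ne_zero.mpr (Nat.factorial_ne_zero _)
    field_simp
    ring
  · intro j hj hj0
    rw [iterate_derivative_C_mul, iterate_derivative_X_pow_eq_C_mul]
    rw [Finset.mem_range] at hj
    rw [Nat.descFactorial_eq_zero_iff_lt.mpr (by omega)]
    simp
  · intro h
    exact absurd (Finset.mem_range.mpr (by omega)) h

theorem keyJ (l p q : ℕ) (hqp : q ≤ p) :
    (∫ x in (0:ℝ)..1, (x:ℝ)^l * eval x (Zpoly l p) * eval x (Zpoly l q))
      = if q = p then 1/((l:ℝ) + 2*p + 1) else 0 := by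
  have hrw : ∀ x : ℝ, (x:ℝ)^l * eval x (Zpoly l p) * eval x (Zpoly l q)
      = eval x (Zpoly l q) * eval x (derivative^[p] (Gpoly l p)) / (p.factorial : ℝ) := by
    intro x
    rw [rodrigues, eval_mul, eval_mul, eval_C, eval_pow, eval_X]
    have : (p.factorial : ℝ) ≠ 0 := Nat.cast_ne_zero.mpr (Nat.factorial_ne_zero _)
    field_simp
  rw [intervalIntegral.integral_congr (g := fun x =>
      eval x (Zpoly l q) * eval x (derivative^[p] (Gpoly l p)) / (p.factorial : ℝ))
      (fun x _ => hrw x)]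
  simp_rw [div_eq_mul_inv, intervalIntegral.integral_mul_const]
  rw [ibp_iter l p (Zpoly l q) p le_rfl, Nat.sub_self]
  simp only [Function.iterate_zero_apply]
  by_cases hq : q = p
  · subst hq
    rw [iterate_derivative_Zpoly]
    have hint : (∫ x in (0:ℝ)..1,
        eval x (C (((l + 2*q).factorial : ℝ) / ((l + q).factorial : ℝ))) * eval x (Gpoly l q))
        = (((l + 2*q).factorial : ℝ) / ((l + q).factorial : ℝ)) *
            ((-1:ℝ)^q * (((l+q).factorial : ℝ) * (q.factorial : ℝ) / ((l+q+q+1).factorial : ℝ))) := by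
      simp_rw [eval_C, Gpoly, eval_mul, eval_pow, eval_sub, eval_X, eval_one]
      rw [intervalIntegral.integral_const_mul, beta_int]
    rw [hint]
    have hne1 : ((l+q).factorial : ℝ) ≠ 0 := Nat.cast_ne_zero.mpr (Nat.factorial_ne_zero _)
    have hne2 : ((q).factorial : ℝ) ≠ 0 := Nat.cast_ne_zero.mpr (Nat.factorial_ne_zero _)
    have hne3 : ((l+q+q+1).factorial : ℝ) ≠ 0 := Nat.cast_ne_zero.mpr (Nat.factorial_ne_zero _)
    have hne4 : ((l:ℝ) + 2*q + 1) ≠ 0 := by positivity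
    have hfs : ((l+q+q+1).factorial : ℝ) = ((l:ℝ) + 2*q + 1) * ((l + 2*q).factorial : ℝ) := by
      rw [show l+q+q+1 = (l+2*q) + 1 from by omega, Nat.factorial_succ]
      push_cast; ring
    rw [if_pos rfl, hfs]
    have hsq : ((-1:ℝ)^q) * ((-1:ℝ)^q) = 1 := by
      rw [← pow_add, show q + q = 2*q from by omega, pow_mul, neg_one_sq, one_pow]
    have hne5 : ((l+2*q).factorial : ℝ) ≠ 0 := Nat.cast_ne_zero.mpr (Nat.factorial_ne_zero _)
    have hrearr : ∀ A B c : ℝ, (-1:ℝ)^q * (A * ((-1:ℝ)^q * B)) * c = A * B * c := by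
      intro A B c
      calc (-1:ℝ)^q * (A * ((-1:ℝ)^q * B)) * c = ((-1:ℝ)^q * (-1:ℝ)^q) * (A * B * c) := by ring
        _ = A * B * c := by rw [hsq, one_mul]
    rw [hrearr]
    field_simp
  · rw [if_neg hq]
    rw [Polynomial.iterate_derivative_eq_zero (lt_of_le_of_lt (natDegree_Zpoly_le l q) (by omega))]
    simp

theorem subst_sq (W : ℝ[X]) :
    (∫ r in (0:ℝ)..1, eval (r^2) W * (2*r)) = ∫ t in (0:ℝ)..1, eval t W := by
  have h := intervalIntegral.integral_comp_mul_deriv (a := (0:ℝ)) (b := 1)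
    (f := fun r : ℝ => r^2) (f' := fun r : ℝ => 2*r) (g := fun t => eval t W)
    (fun x _ => by simpa using hasDerivAt_pow 2 x)
    ((continuous_const.mul continuous_id).continuousOn) (W.continuous)
  simpa using h

theorem radialPoly_eq (m l : ℕ) (hm : l ≤ m) (he : Even (m - l)) (r : ℝ) :
    radialPoly m l r = r^l * eval (r^2) (Zpoly l ((m-l)/2)) := by
  obtain ⟨t, ht⟩ := he
  set p := (m - l) / 2 with hp
  have hm2 : m = l + 2*p := by omega
  rw [radialPoly, Zpoly, eval_finset_sum, Finset.mul_sum]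
  refine Finset.sum_congr rfl fun j hj => ?_
  rw [Finset.mem_range] at hj
  have hj' : j ≤ p := by omega
  rw [eval_mul, eval_C, eval_pow, eval_X]
  rw [show (m + l)/2 = l + p from by omega, show m - j = l + 2*p - j from by omega]
  rw [show r ^ (m - 2*j) = r^l * (r^2)^(p-j) from by
    rw [← pow_mul, ← pow_add, show l + 2*(p-j) = m - 2*j from by omega]]
  ring

end ZernikeAux

open Polynomial in
/-- Orthogonality of the radial polynomials on `[0,1]` with weight `r`. -/
theorem radialPoly_orthogonal (l m m' : ℕ)
    (hm : l ≤ m) (hm' : l ≤ m') (he : Even (m - l)) (he' : Even (m' - l)) :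
    ∫ r in (0 : ℝ)..1,
        Real.sqrt (2 * (m + 1)) * radialPoly m l r *
          (Real.sqrt (2 * (m' + 1)) * radialPoly m' l r) * r
      = if m = m' then 1 else 0 := by
  obtain ⟨t, ht⟩ := he
  obtain ⟨t', ht'⟩ := he'
  set p := (m - l) / 2 with hp
  set q := (m' - l) / 2 with hq
  have hm2 : m = l + 2*p := by omega
  have hm2' : m' = l + 2*q := by omega
  set K : ℝ := Real.sqrt (2 * (m + 1)) with hK
  set K' : ℝ := Real.sqrt (2 * (m' + 1)) with hK'
  set W : ℝ[X] := X^l * Zpoly l p * Zpoly l q with hW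
  have hcongr : ∀ r ∈ Set.uIcc (0:ℝ) 1,
      K * radialPoly m l r * (K' * radialPoly m' l r) * r
        = (K * K' / 2) * (eval (r^2) W * (2*r)) := by
    intro r _
    rw [radialPoly_eq m l hm ⟨t, ht⟩, radialPoly_eq m' l hm' ⟨t', ht'⟩, hW]
    rw [eval_mul, eval_mul, eval_pow, eval_X, ← hp, ← hq]
    ring
  rw [intervalIntegral.integral_congr hcongr, intervalIntegral.integral_const_mul, subst_sq]
  have hevalW : ∀ x : ℝ, eval x W = x^l * eval x (Zpoly l p) * eval x (Zpoly l q) := by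
    intro x
    rw [hW, eval_mul, eval_mul, eval_pow, eval_X]
  by_cases hmm : m = m'
  · have hpq : p = q := by omega
    rw [hpq] at hevalW
    have hKK : K * K' = 2 * (m + 1) := by
      rw [hK, hK', ← hmm, Real.mul_self_sqrt (by positivity)]
    rw [if_pos hmm]
    rw [intervalIntegral.integral_congr (g := fun x =>
      x^l * eval x (Zpoly l q) * eval x (Zpoly l q)) (fun x _ => hevalW x)]
    rw [keyJ l q q le_rfl, if_pos rfl, hKK]
    have hm2q : m = l + 2*q := by omega
    have : ((l:ℝ) + 2*q + 1) = (m:ℝ) + 1 := by rw [hm2q]; push_cast; ring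
    rw [this]
    have hne : ((m:ℝ) + 1) ≠ 0 := by positivity
    field_simp
  · rw [if_neg hmm]
    have hpq : p ≠ q := fun h => hmm (by omega)
    rcases le_total q p with hle | hle
    · rw [intervalIntegral.integral_congr (g := fun x =>
        x^l * eval x (Zpoly l p) * eval x (Zpoly l q)) (fun x _ => hevalW x)]
      rw [keyJ l p q hle, if_neg (fun h => hpq h.symm), mul_zero]
    · rw [intervalIntegral.integral_congr (g := fun x =>
        x^l * eval x (Zpoly l q) * eval x (Zpoly l p)) (fun x _ => by rw [hevalW x]; ring)]
      rw [keyJ l q p hle, if_neg hpq, mul_zero]
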